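/- The function F(z,w) := (2z(1−z) − w²)/(2(1−z) − w²) maps the open unit ball 𝔹² ⊂ ℂ² holomorphically into the open unit disc 𝔻, and satisfies F(λ,0) = λ for every λ ∈ 𝔻. -/

import Mathlib

/-- The open unit Euclidean ball in ℂ². -/
def unitBall2 : Set (ℂ × ℂ) := {p | ‖p.1‖ ^ 2 + ‖p.2‖ ^ 2 < 1}

lemma key_lt (z w : ℂ) (h : ‖z‖ ^ 2 + ‖w‖ ^ 2 < 1) :
    ‖2*z*(1 - z) - w^2‖ < ‖2*(1 - z) - w^2‖ := by
  apply lt_of_pow_lt_pow_left₀ 2 (norm_nonneg _)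
  rw [Complex.sq_norm, Complex.sq_norm]
  rw [Complex.sq_norm, Complex.sq_norm] at h
  simp only [Complex.normSq_apply, pow_two, Complex.mul_re, Complex.mul_im,
    Complex.sub_re, Complex.sub_im, Complex.one_re, Complex.one_im,
    Complex.re_ofNat, Complex.im_ofNat] at h ⊢
  set x := z.re; set y := z.im; set u := w.re; set v := w.im
  have h1 : (0:ℝ) < (1-x)^2 + y^2 := by nlinarith [sq_nonneg u, sq_nonneg v, sq_nonneg y]
  have h2 : (0:ℝ) < 1 - (x*x + y*y + (u*u + v*v)) := by nlinarith
  nlinarith [sq_nonneg ((1-x)*v + y*u), mul_pos h1 h2]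

lemma denom_ne (z w : ℂ) (h : ‖z‖ ^ 2 + ‖w‖ ^ 2 < 1) :
    2*(1 - z) - w^2 ≠ 0 := by
  intro h0
  have := key_lt z w h
  rw [h0] at this
  simp only [norm_zero] at this
  exact (norm_nonneg _).not_gt this

theorem stmt10 (F : ℂ × ℂ → ℂ)
    (hF : ∀ p : ℂ × ℂ, F p = (2*p.1*(1 - p.1) - p.2^2) / (2*(1 - p.1) - p.2^2)) :
    DifferentiableOn ℂ F unitBall2 ∧
    Set.MapsTo F unitBall2 (Metric.ball (0:ℂ) 1) ∧
    (∀ l ∈ Metric.ball (0:ℂ) 1, F (l, 0) = l) := by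
  have hFeq : F = fun p : ℂ × ℂ => (2*p.1*(1 - p.1) - p.2^2) / (2*(1 - p.1) - p.2^2) :=
    funext hF
  refine ⟨?_, ?_, ?_⟩
  · rw [hFeq]
    have hnum : DifferentiableOn ℂ (fun p : ℂ × ℂ => 2*p.1*(1 - p.1) - p.2^2) unitBall2 := by
      fun_prop
    have hden : DifferentiableOn ℂ (fun p : ℂ × ℂ => 2*(1 - p.1) - p.2^2) unitBall2 := by
      fun_prop
    simp only [div_eq_mul_inv]
    exact hnum.mul (hden.inv (fun p hp => denom_ne (Prod.fst p) (Prod.snd p) hp))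
  · intro p hp
    rw [Metric.mem_ball, dist_zero_right, hF, norm_div]
    have hd := key_lt p.1 p.2 hp
    have hpos : 0 < ‖2*(1 - p.1) - p.2^2‖ :=
      lt_of_le_of_lt (norm_nonneg _) hd
    exact (div_lt_one hpos).mpr hd
  · intro l hl
    rw [Metric.mem_ball, dist_zero_right] at hl
    have h1 : (1 : ℂ) - l ≠ 0 := by
      intro h
      have : l = 1 := by linear_combination -h
      rw [this] at hl; simp at hl
    rw [hF]
    show (2*l*(1 - l) - 0^2) / (2*(1 - l) - 0^2) = l
    have h2 : 2*((1:ℂ) - l) - (0:ℂ)^2 ≠ 0 := by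
      simpa using mul_ne_zero two_ne_zero h1
    rw [div_eq_iff h2]
    ring
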